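/- In a graph H whose vertex set is partitioned into 'super-vertices' of cost 0 and 'original' vertices of positive cost, where no two super-vertices are adjacent, any minimum-cost path P (cost of a path = sum of costs of its vertices) between two vertices a, b contains at most 2 original vertices adjacent to any fixed super-vertex R not on P. -/

import Mathlib

open scoped Classical

open SimpleGraph Walk List

section aux
variable {V : Type*} [DecidableEq V] {H : SimpleGraph V}

private lemma takeUntil_idxOf {a b u v : V} (P : H.Walk a b) (hnd : P.support.Nodup)
    (hu : u ∈ P.support) (hv : v ∈ (P.takeUntil u hu).support) :
    P.support.idxOf v ≤ P.support.idxOf u := by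
  have hsupp : P.support = (P.takeUntil u hu).support ++ (P.dropUntil u hu).support.tail := by
    conv_lhs => rw [← P.take_spec hu]
    exact support_append _ _
  set pre := (P.takeUntil u hu).support with hpre
  have hpnd : pre.Nodup := by
    rw [hsupp] at hnd; exact (List.nodup_append.mp hnd).1
  have hne : pre ≠ [] := (P.takeUntil u hu).support_ne_nil
  have hlast : pre.getLast hne = u := (P.takeUntil u hu).getLast_support
  have hdec : pre.dropLast ++ [u] = pre := by
    rw [← hlast]; exact List.dropLast_append_getLast hne
  have hu_not : u ∉ pre.dropLast := by
    rw [← hdec] at hpnd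
    have := (List.nodup_append'.mp hpnd).2.2
    intro h; exact this h (List.mem_singleton_self u)
  have hiu : pre.idxOf u = pre.dropLast.length := by
    conv_lhs => rw [← hdec]
    rw [List.idxOf_append_of_notMem hu_not, List.idxOf_cons_self]
    omega
  have hlen : pre.length = pre.dropLast.length + 1 := by
    conv_lhs => rw [← hdec]
    simp
  have h1 : P.support.idxOf v = pre.idxOf v := by
    rw [hsupp]; exact List.idxOf_append_of_mem hv
  have h2 : P.support.idxOf u = pre.idxOf u := by
    rw [hsupp]
    exact List.idxOf_append_of_mem ((P.takeUntil u hu).end_mem_support)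
  have h3 : pre.idxOf v < pre.length := List.idxOf_lt_length_iff.mpr hv
  omega

private lemma dropUntil_idxOf {a b u v : V} (P : H.Walk a b) (hnd : P.support.Nodup)
    (hu : u ∈ P.support) (hv : v ∈ (P.dropUntil u hu).support) :
    P.support.idxOf u ≤ P.support.idxOf v := by
  have hsupp : P.support = (P.takeUntil u hu).support ++ (P.dropUntil u hu).support.tail := by
    conv_lhs => rw [← P.take_spec hu]
    exact support_append _ _
  set pre := (P.takeUntil u hu).support
  have hvcases : v = u ∨ v ∈ (P.dropUntil u hu).support.tail := by
    have := (P.dropUntil u hu).support_eq_cons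
    rw [this] at hv
    exact List.mem_cons.mp hv
  rcases hvcases with rfl | hv'
  · exact le_refl _
  · have hvnotpre : v ∉ pre := by
      rw [hsupp] at hnd
      intro h
      exact (List.disjoint_of_nodup_append hnd) h hv'
    have h1 : pre.length ≤ P.support.idxOf v := by
      rw [hsupp, List.idxOf_append_of_notMem hvnotpre]; omega
    have h2 : P.support.idxOf u = pre.idxOf u := by
      rw [hsupp]
      exact List.idxOf_append_of_mem ((P.takeUntil u hu).end_mem_support)
    have h3 : pre.idxOf u < pre.length :=
      List.idxOf_lt_length_iff.mpr ((P.takeUntil u hu).end_mem_support)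
    omega

end aux

/-- On a minimum-cost path in a graph whose cost-0 super-vertices form an independent
set (all other vertices having positive cost), at most 2 original (positive-cost)
vertices of the path are adjacent to any fixed super-vertex `R` not on the path. -/
theorem stmt_16 {V : Type*} [DecidableEq V] (H : SimpleGraph V)
    (super : V → Prop) (cost : V → ℝ)
    (hcost0 : ∀ w, super w → cost w = 0)
    (hcostpos : ∀ w, ¬ super w → 0 < cost w)
    (hnosuper : ∀ u w, super u → super w → ¬ H.Adj u w)
    (a b : V) (P : H.Walk a b) (hP : P.IsPath)
    (hmin : ∀ Q : H.Walk a b, Q.IsPath →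
      ∑ w ∈ P.support.toFinset, cost w ≤ ∑ w ∈ Q.support.toFinset, cost w)
    (R : V) (hRsuper : super R) (hR : R ∉ P.support) :
    (P.support.toFinset.filter (fun w => ¬ super w ∧ H.Adj w R)).card ≤ 2 := by
  by_contra hcard
  push_neg at hcard
  set S := P.support.toFinset.filter (fun w => ¬ super w ∧ H.Adj w R) with hS
  have hnd : P.support.Nodup := (Walk.isPath_def P).mp hP
  have hcost_nonneg : ∀ w : V, 0 ≤ cost w := by
    intro w
    by_cases hw : super w
    · exact le_of_eq (hcost0 w hw).symm
    · exact le_of_lt (hcostpos w hw)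
  have key : ∀ x y z : V, x ∈ S → y ∈ S → z ∈ S →
      P.support.idxOf x < P.support.idxOf y →
      P.support.idxOf y < P.support.idxOf z → False := by
    intro x y z hxS hyS hzS hxy hyz
    simp only [hS, Finset.mem_filter, List.mem_toFinset] at hxS hyS hzS
    obtain ⟨hxP, hxsup, hxR⟩ := hxS
    obtain ⟨hyP, hysup, hyR⟩ := hyS
    obtain ⟨hzP, hzsup, hzR⟩ := hzS
    set Q : H.Walk a b :=
      (P.takeUntil x hxP).append
        (Walk.cons hxR (Walk.cons hzR.symm (P.dropUntil z hzP))) with hQdef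
    have hQsupp : Q.support =
        (P.takeUntil x hxP).support ++ (R :: (P.dropUntil z hzP).support) := by
      rw [hQdef, Walk.support_append]
      simp
    have hpresub : ∀ v ∈ (P.takeUntil x hxP).support, v ∈ P.support :=
      fun v hv => P.support_takeUntil_subset hxP hv
    have hdsub : ∀ v ∈ (P.dropUntil z hzP).support, v ∈ P.support :=
      fun v hv => P.support_dropUntil_subset hzP hv
    have hQpath : Q.IsPath := by
      rw [Walk.isPath_def, hQsupp, List.nodup_append']
      refine ⟨(Walk.isPath_def _).mp (hP.takeUntil hxP), ?_, ?_⟩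
      · rw [List.nodup_cons]
        exact ⟨fun h => hR (hdsub R h), (Walk.isPath_def _).mp (hP.dropUntil hzP)⟩
      · intro v hvpre hvmem
        rcases List.mem_cons.mp hvmem with rfl | hvd
        · exact hR (hpresub _ hvpre)
        · have h1 := takeUntil_idxOf P hnd hxP hvpre
          have h2 := dropUntil_idxOf P hnd hzP hvd
          omega
    have hyQ : y ∉ Q.support := by
      rw [hQsupp]
      intro hmem
      rcases List.mem_append.mp hmem with hvpre | hvmem
      · have := takeUntil_idxOf P hnd hxP hvpre; omega
      · rcases List.mem_cons.mp hvmem with rfl | hvd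
        · exact hR hyP
        · have := dropUntil_idxOf P hnd hzP hvd; omega
    have hsub : Q.support.toFinset ⊆ insert R (P.support.toFinset.erase y) := by
      intro v hv
      rw [List.mem_toFinset] at hv
      rcases List.mem_append.mp (hQsupp ▸ hv) with hvpre | hvmem
      · refine Finset.mem_insert_of_mem (Finset.mem_erase.mpr ⟨?_, ?_⟩)
        · rintro rfl; exact hyQ hv
        · exact List.mem_toFinset.mpr (hpresub _ hvpre)
      · rcases List.mem_cons.mp hvmem with rfl | hvd
        · exact Finset.mem_insert_self _ _
        · refine Finset.mem_insert_of_mem (Finset.mem_erase.mpr ⟨?_, ?_⟩)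
          · rintro rfl; exact hyQ hv
          · exact List.mem_toFinset.mpr (hdsub _ hvd)
    have hsum1 : ∑ w ∈ Q.support.toFinset, cost w ≤
        ∑ w ∈ insert R (P.support.toFinset.erase y), cost w :=
      Finset.sum_le_sum_of_subset_of_nonneg hsub (fun w _ _ => hcost_nonneg w)
    have hRnot : R ∉ P.support.toFinset.erase y :=
      fun h => hR (List.mem_toFinset.mp (Finset.mem_of_mem_erase h))
    have hsum2 : ∑ w ∈ insert R (P.support.toFinset.erase y), cost w =
        cost R + ∑ w ∈ P.support.toFinset.erase y, cost w :=
      Finset.sum_insert hRnot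
    have hsum3 : (∑ w ∈ P.support.toFinset.erase y, cost w) + cost y =
        ∑ w ∈ P.support.toFinset, cost w :=
      Finset.sum_erase_add _ _ (List.mem_toFinset.mpr hyP)
    have hminQ := hmin Q hQpath
    have hy0 := hcostpos y hysup
    have hR0 := hcost0 R hRsuper
    linarith
  -- extract three distinct elements of S
  obtain ⟨x, hx⟩ := Finset.card_pos.mp (by omega : 0 < S.card)
  have h2 : 0 < (S.erase x).card := by
    rw [Finset.card_erase_of_mem hx]; omega
  obtain ⟨y, hy⟩ := Finset.card_pos.mp h2
  have h3 : 0 < ((S.erase x).erase y).card := by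
    rw [Finset.card_erase_of_mem hy, Finset.card_erase_of_mem hx]; omega
  obtain ⟨z, hz⟩ := Finset.card_pos.mp h3
  have hyx : y ≠ x := (Finset.mem_erase.mp hy).1
  have hzy : z ≠ y := (Finset.mem_erase.mp hz).1
  have hzx : z ≠ x := (Finset.mem_erase.mp (Finset.mem_of_mem_erase hz)).1
  have hyS : y ∈ S := Finset.mem_of_mem_erase hy
  have hzS : z ∈ S := Finset.mem_of_mem_erase (Finset.mem_of_mem_erase hz)
  have hmemP : ∀ w ∈ S, w ∈ P.support := by
    intro w hw
    exact List.mem_toFinset.mp (Finset.mem_filter.mp hw).1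
  have hxP := hmemP x hx
  have hyP := hmemP y hyS
  have hzP := hmemP z hzS
  have hixy : P.support.idxOf x ≠ P.support.idxOf y :=
    fun h => hyx ((List.idxOf_inj hxP (y := y)).mp h).symm
  have hixz : P.support.idxOf x ≠ P.support.idxOf z :=
    fun h => hzx ((List.idxOf_inj hxP (y := z)).mp h).symm
  have hiyz : P.support.idxOf y ≠ P.support.idxOf z :=
    fun h => hzy ((List.idxOf_inj hyP (y := z)).mp h).symm
  rcases lt_or_gt_of_ne hixy with h1 | h1 <;>
    rcases lt_or_gt_of_ne hixz with h2 | h2 <;>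
      rcases lt_or_gt_of_ne hiyz with h3 | h3
  · exact key x y z hx hyS hzS h1 h3
  · exact key x z y hx hzS hyS h2 h3
  · omega
  · exact key z x y hzS hx hyS h2 h1
  · exact key y x z hyS hx hzS h1 h2
  · omega
  · exact key y z x hyS hzS hx h3 h2
  · exact key z y x hzS hyS hx h3 h1
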